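/- Let r ≥ 1 and k ≥ 2 be integers and let G = (V,E) be a finite simple graph. Then m_e(G □ P_k, r) ≤ m_e(G,r) + (k−1)·m_e(G,r−1) + d_{r−1}(G) + (k−1)·(d_0(G) + d_1(G) + … + d_{r−2}(G)), where the sum d_0 + … + d_{r−2} is empty when r = 1. -/

import Mathlib

open Polynomial

/-- A set `S` of edges is closed under the `r`-bond bootstrap infection rule: whenever a
vertex `v` is incident to at least `r` edges in `S`, all edges incident to `v` are in `S`. -/
def BondClosed {V : Type*} (G : SimpleGraph V) (r : ℕ) (S : Set (Sym2 V)) : Prop :=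
  ∀ v : V, r ≤ {u | G.Adj v u ∧ s(v, u) ∈ S}.ncard → ∀ w : V, G.Adj v w → s(v, w) ∈ S

/-- `F` percolates in the `r`-bond bootstrap process on `G`: every set of edges containing `F`
that is closed under the infection rule contains all edges of `G`. -/
def BondPercolates {V : Type*} (G : SimpleGraph V) (r : ℕ) (F : Set (Sym2 V)) : Prop :=
  ∀ S : Set (Sym2 V), F ⊆ S → BondClosed G r S → G.edgeSet ⊆ S

/-- `mEdge G r` is the minimum size of a set of edges of `G` percolating in the `r`-bond
bootstrap process, i.e. `m_e(G,r)`. -/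
noncomputable def mEdge {V : Type*} (G : SimpleGraph V) (r : ℕ) : ℕ :=
  sInf {n | ∃ F : Finset (Sym2 V), ↑F ⊆ G.edgeSet ∧ BondPercolates G r ↑F ∧ F.card = n}

/-- A set `S` of vertices is closed under the `r`-neighbour bootstrap infection rule. -/
def NeighClosed {V : Type*} (G : SimpleGraph V) (r : ℕ) (S : Set V) : Prop :=
  ∀ v : V, r ≤ {u | G.Adj v u ∧ u ∈ S}.ncard → v ∈ S

/-- `A` percolates in the `r`-neighbour bootstrap process on `G`. -/
def NeighPercolates {V : Type*} (G : SimpleGraph V) (r : ℕ) (A : Set V) : Prop :=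
  ∀ S : Set V, A ⊆ S → NeighClosed G r S → ∀ v : V, v ∈ S

/-- `mVertex G r` is the minimum size of a percolating set of vertices for the `r`-neighbour
bootstrap process, i.e. `m(G,r)`. -/
noncomputable def mVertex {V : Type*} (G : SimpleGraph V) (r : ℕ) : ℕ :=
  sInf {n | ∃ A : Finset V, NeighPercolates G r ↑A ∧ A.card = n}

/-- `c` is a proper edge colouring of `G`: distinct edges sharing an endpoint get distinct
colours. -/
def ProperEdgeColouring {V : Type*} (G : SimpleGraph V) (c : Sym2 V → ℝ) : Prop :=
  ∀ e₁ ∈ G.edgeSet, ∀ e₂ ∈ G.edgeSet, e₁ ≠ e₂ → (∃ v : V, v ∈ e₁ ∧ v ∈ e₂) → c e₁ ≠ c e₂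

/-- The space `W^r_{G,c}` of functions on edges recognized by systems of polynomials of degree
at most `r - 1` (degree `< r`) attached to the vertices. Functions are represented as functions
on `Sym2 V` vanishing outside the edge set of `G`. -/
noncomputable def Wspace {V : Type*} (G : SimpleGraph V) (c : Sym2 V → ℝ) (r : ℕ) :
    Submodule ℝ (Sym2 V → ℝ) where
  carrier := {φ | (∀ e, e ∉ G.edgeSet → φ e = 0) ∧
    ∃ p : V → ℝ[X], (∀ v, (p v).degree < (r : WithBot ℕ)) ∧
      ∀ v w : V, G.Adj v w → (p v).eval (c s(v, w)) = φ s(v, w)}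
  zero_mem' := ⟨fun _ _ => rfl, fun _ => 0,
    fun _ => by simp [Polynomial.degree_zero], fun _ _ _ => by simp⟩
  add_mem' := by
    rintro φ ψ ⟨hφ0, p, hp, hpe⟩ ⟨hψ0, q, hq, hqe⟩
    exact ⟨fun e he => by simp [hφ0 e he, hψ0 e he], fun v => p v + q v,
      fun v => lt_of_le_of_lt (Polynomial.degree_add_le _ _) (max_lt (hp v) (hq v)),
      fun v w hvw => by simp [hpe v w hvw, hqe v w hvw]⟩
  smul_mem' := by
    rintro a φ ⟨hφ0, p, hp, hpe⟩
    exact ⟨fun e he => by simp [hφ0 e he], fun v => a • p v,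
      fun v => lt_of_le_of_lt (Polynomial.degree_smul_le _ _) (hp v),
      fun v w hvw => by simp [hpe v w hvw]⟩

/-- `degCount G t` is the number of vertices of `G` of degree exactly `t`. -/
noncomputable def degCount {V : Type*} (G : SimpleGraph V) (t : ℕ) : ℕ :=
  {v : V | (G.neighborSet v).ncard = t}.ncard

section Aux7

open SimpleGraph Finset

section Aux

lemma mEdge_exists {V : Type*} [Fintype V] (G : SimpleGraph V) (r : ℕ) :
    ∃ F : Finset (Sym2 V), ↑F ⊆ G.edgeSet ∧ BondPercolates G r ↑F ∧ F.card = mEdge G r := by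
  classical
  have hne : {n | ∃ F : Finset (Sym2 V), ↑F ⊆ G.edgeSet ∧ BondPercolates G r ↑F ∧ F.card = n}.Nonempty :=
    ⟨_, G.edgeSet.toFinite.toFinset, by rw [Set.Finite.coe_toFinset],
      fun S hF _ e he => hF (by rw [Set.Finite.coe_toFinset]; exact he), rfl⟩
  exact Nat.sInf_mem hne

variable {V : Type*} [Fintype V] {k r : ℕ} {G : SimpleGraph V}

omit [Fintype V] in
lemma layer_inj (i : Fin k) : Function.Injective (fun u : V => (u, i)) :=
  fun _ _ h => congrArg Prod.fst h

lemma layer_closed {S : Set (Sym2 (V × Fin k))}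
    (hS : BondClosed (G.boxProd (SimpleGraph.pathGraph k)) r S) (i : Fin k) :
    BondClosed G r {e | Sym2.map (fun v => (v, i)) e ∈ S} := by
  intro v hv w hw
  have hmap : ∀ u ∈ {u | G.Adj v u ∧ s(v, u) ∈ {e | Sym2.map (fun v => (v, i)) e ∈ S}},
      (u, i) ∈ {u' | (G.boxProd (SimpleGraph.pathGraph k)).Adj (v, i) u' ∧ s((v, i), u') ∈ S} := by
    rintro u ⟨h1, h2⟩
    exact ⟨by simp [SimpleGraph.boxProd_adj, h1], by simpa [Sym2.map_pair_eq] using h2⟩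
  have hle := Set.ncard_le_ncard_of_injOn _ hmap ((layer_inj i).injOn) (Set.toFinite _)
  have hfire := hS (v, i) (le_trans hv hle) (w, i) (by simp [SimpleGraph.boxProd_adj, hw])
  simpa [Sym2.map_pair_eq] using hfire

lemma layer_closed_pred {S : Set (Sym2 (V × Fin k))}
    (hS : BondClosed (G.boxProd (SimpleGraph.pathGraph k)) r S) (hr : 1 ≤ r) (i j : Fin k)
    (hij : (SimpleGraph.pathGraph k).Adj i j) (hcross : ∀ v : V, s((v, i), (v, j)) ∈ S) :
    BondClosed G (r - 1) {e | Sym2.map (fun v => (v, i)) e ∈ S} := by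
  intro v hv w hw
  set N := {u' | (G.boxProd (SimpleGraph.pathGraph k)).Adj (v, i) u' ∧ s((v, i), u') ∈ S} with hN
  set A := {u | G.Adj v u ∧ s(v, u) ∈ {e | Sym2.map (fun v => (v, i)) e ∈ S}} with hA
  have hsub : insert (v, j) ((fun u => (u, i)) '' A) ⊆ N := by
    rintro x (rfl | ⟨u, ⟨h1, h2⟩, rfl⟩)
    · exact ⟨by simp [SimpleGraph.boxProd_adj, hij], hcross v⟩
    · exact ⟨by simp [SimpleGraph.boxProd_adj, h1], by simpa [Sym2.map_pair_eq] using h2⟩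
  have hnot : (v, j) ∉ (fun u => (u, i)) '' A := by
    rintro ⟨u, -, h⟩
    exact hij.ne (congrArg Prod.snd h)
  have hcard : r ≤ (insert (v, j) ((fun u => (u, i)) '' A)).ncard := by
    rw [Set.ncard_insert_of_notMem hnot (Set.toFinite _),
      Set.ncard_image_of_injective _ (layer_inj i)]
    omega
  have hfire := hS (v, i) (le_trans hcard (Set.ncard_le_ncard hsub (Set.toFinite _))) (w, i)
    (by simp [SimpleGraph.boxProd_adj, hw])
  simpa [Sym2.map_pair_eq] using hfire

lemma ncard_layer_nbrs {S : Set (Sym2 (V × Fin k))} (i : Fin k) (v : V)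
    (hlayer : ∀ w, G.Adj v w → s((v, i), (w, i)) ∈ S) :
    (G.neighborSet v).ncard ≤
      {u' | (G.boxProd (SimpleGraph.pathGraph k)).Adj (v, i) u' ∧ s((v, i), u') ∈ S}.ncard :=
  Set.ncard_le_ncard_of_injOn (fun u => (u, i))
    (fun u hu => ⟨by simp [SimpleGraph.boxProd_adj, (SimpleGraph.mem_neighborSet ..).mp hu],
      hlayer u ((SimpleGraph.mem_neighborSet ..).mp hu)⟩)
    ((layer_inj i).injOn) (Set.toFinite _)

lemma ncard_layer_nbrs' {S : Set (Sym2 (V × Fin k))} (i j : Fin k) (v : V)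
    (hlayer : ∀ w, G.Adj v w → s((v, i), (w, i)) ∈ S)
    (hij : (SimpleGraph.pathGraph k).Adj i j) (hc : s((v, i), (v, j)) ∈ S) :
    (G.neighborSet v).ncard + 1 ≤
      {u' | (G.boxProd (SimpleGraph.pathGraph k)).Adj (v, i) u' ∧ s((v, i), u') ∈ S}.ncard := by
  have hsub : insert (v, j) ((fun u => (u, i)) '' G.neighborSet v) ⊆
      {u' | (G.boxProd (SimpleGraph.pathGraph k)).Adj (v, i) u' ∧ s((v, i), u') ∈ S} := by
    rintro x (rfl | ⟨u, hu, rfl⟩)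
    · exact ⟨by simp [SimpleGraph.boxProd_adj, hij], hc⟩
    · exact ⟨by simp [SimpleGraph.boxProd_adj, (SimpleGraph.mem_neighborSet ..).mp hu],
        hlayer u ((SimpleGraph.mem_neighborSet ..).mp hu)⟩
  have hnot : (v, j) ∉ (fun u => (u, i)) '' G.neighborSet v := by
    rintro ⟨u, -, h⟩
    exact hij.ne (congrArg Prod.snd h)
  calc (G.neighborSet v).ncard + 1
      = (insert (v, j) ((fun u => (u, i)) '' G.neighborSet v)).ncard := by
        rw [Set.ncard_insert_of_notMem hnot (Set.toFinite _),
          Set.ncard_image_of_injective _ (layer_inj i)]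
    _ ≤ _ := Set.ncard_le_ncard hsub (Set.toFinite _)

end Aux

end Aux7

/-- Upper bound for `m_e(G □ P_k, r)`; the sum over `t ∈ range (r-1)` is
`d_0 + ⋯ + d_{r-2}` and is empty when `r = 1`. -/
theorem stmt7 {V : Type*} [Fintype V] (G : SimpleGraph V) (r k : ℕ) (hr : 1 ≤ r)
    (hk : 2 ≤ k) :
    mEdge (G.boxProd (SimpleGraph.pathGraph k)) r ≤
      mEdge G r + (k - 1) * mEdge G (r - 1) + degCount G (r - 1)
        + (k - 1) * ∑ t ∈ Finset.range (r - 1), degCount G t := by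
  classical
  obtain ⟨Fr, hFrE, hFrP, hFrC⟩ := mEdge_exists G r
  obtain ⟨Fp, hFpE, hFpP, hFpC⟩ := mEdge_exists G (r - 1)
  have hk0 : (0 : ℕ) < k := by omega
  have hk1 : (1 : ℕ) < k := by omega
  set deg : V → ℕ := fun v => (G.neighborSet v).ncard with hdeg
  set A : Finset (Sym2 (V × Fin k)) := Fr.image (Sym2.map (fun v => (v, (⟨0, hk0⟩ : Fin k))))
    with hAdef
  set B : Finset (Sym2 (V × Fin k)) := (Finset.range (k - 1)).biUnion
    (fun j => if h : j + 1 < k then Fp.image (Sym2.map (fun v => (v, (⟨j + 1, h⟩ : Fin k))))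
      else ∅) with hBdef
  set C : Finset (Sym2 (V × Fin k)) := (Finset.univ.filter fun v => deg v + 1 ≤ r).image
    (fun v => s((v, (⟨0, hk0⟩ : Fin k)), (v, ⟨1, hk1⟩))) with hCdef
  set D : Finset (Sym2 (V × Fin k)) := (Finset.range (k - 2)).biUnion
    (fun j => if h : j + 2 < k then (Finset.univ.filter fun v => deg v + 2 ≤ r).image
      (fun v => s((v, (⟨j + 1, by omega⟩ : Fin k)), (v, ⟨j + 2, h⟩))) else ∅) with hDdef
  set F : Finset (Sym2 (V × Fin k)) := A ∪ B ∪ C ∪ D with hFdef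
  -- F consists of edges of the product
  have hFE : ↑F ⊆ (G.boxProd (SimpleGraph.pathGraph k)).edgeSet := by
    intro e he
    have hlift : ∀ (i : Fin k) (e' : Sym2 V), e' ∈ G.edgeSet →
        Sym2.map (fun v => (v, i)) e' ∈ (G.boxProd (SimpleGraph.pathGraph k)).edgeSet := by
      intro i e'
      induction e' using Sym2.ind with
      | _ x y =>
        intro h
        rw [SimpleGraph.mem_edgeSet] at h
        rw [Sym2.map_pair_eq, SimpleGraph.mem_edgeSet]
        exact Or.inl ⟨h, rfl⟩
    have hcrossE : ∀ (v : V) (i j : Fin k), (i : ℕ) + 1 = (j : ℕ) →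
        s((v, i), (v, j)) ∈ (G.boxProd (SimpleGraph.pathGraph k)).edgeSet := by
      intro v i j hij
      rw [SimpleGraph.mem_edgeSet]
      exact Or.inr ⟨SimpleGraph.pathGraph_adj.mpr (Or.inl hij), rfl⟩
    rw [Finset.mem_coe, hFdef] at he
    simp only [Finset.mem_union] at he
    rcases he with ((hA | hB) | hC) | hD
    · rw [hAdef, Finset.mem_image] at hA
      obtain ⟨e', he', rfl⟩ := hA
      exact hlift _ _ (hFrE he')
    · rw [hBdef, Finset.mem_biUnion] at hB
      obtain ⟨j, hj, hmem⟩ := hB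
      rw [Finset.mem_range] at hj
      rw [dif_pos (by omega : j + 1 < k), Finset.mem_image] at hmem
      obtain ⟨e', he', rfl⟩ := hmem
      exact hlift _ _ (hFpE he')
    · rw [hCdef, Finset.mem_image] at hC
      obtain ⟨v, -, rfl⟩ := hC
      exact hcrossE v _ _ rfl
    · rw [hDdef, Finset.mem_biUnion] at hD
      obtain ⟨j, hj, hmem⟩ := hD
      rw [Finset.mem_range] at hj
      rw [dif_pos (by omega : j + 2 < k), Finset.mem_image] at hmem
      obtain ⟨v, -, rfl⟩ := hmem
      exact hcrossE v _ _ rfl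
  -- F percolates
  have hperc : BondPercolates (G.boxProd (SimpleGraph.pathGraph k)) r ↑F := by
    intro S hFS hclosed
    have hsub : ∀ e : Sym2 (V × Fin k), (e ∈ A ∨ e ∈ B ∨ e ∈ C ∨ e ∈ D) → e ∈ S := by
      intro e he
      apply hFS
      rw [Finset.mem_coe, hFdef]
      simp only [Finset.mem_union]
      tauto
    have key : ∀ i : ℕ, ∀ h : i < k,
        (∀ v w, G.Adj v w → s((v, (⟨i, h⟩ : Fin k)), (w, ⟨i, h⟩)) ∈ S) ∧
        (∀ h' : i + 1 < k, ∀ v : V, s((v, (⟨i, h⟩ : Fin k)), (v, ⟨i + 1, h'⟩)) ∈ S) := by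
      intro i
      induction i with
      | zero =>
        intro h
        have hl : ∀ v w, G.Adj v w → s((v, (⟨0, h⟩ : Fin k)), (w, ⟨0, h⟩)) ∈ S := by
          intro v w hvw
          have h1 : (↑Fr : Set (Sym2 V)) ⊆
              {e | Sym2.map (fun v => (v, (⟨0, h⟩ : Fin k))) e ∈ S} := by
            intro e he
            exact hsub _ (Or.inl (by
              rw [hAdef, Finset.mem_image]
              exact ⟨e, Finset.mem_coe.mp he, rfl⟩))
          have := hFrP _ h1 (layer_closed hclosed _) (G.mem_edgeSet.mpr hvw)
          simpa [Sym2.map_pair_eq] using this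
        refine ⟨hl, fun h' v => ?_⟩
        by_cases hd : r ≤ deg v
        · exact hclosed (v, ⟨0, h⟩)
            (le_trans hd (ncard_layer_nbrs _ v (fun w hw => hl v w hw))) (v, ⟨1, h'⟩)
            (Or.inr ⟨SimpleGraph.pathGraph_adj.mpr (Or.inl rfl), rfl⟩)
        · refine hsub _ (Or.inr (Or.inr (Or.inl ?_)))
          rw [hCdef, Finset.mem_image]
          exact ⟨v, Finset.mem_filter.mpr ⟨Finset.mem_univ v, by omega⟩, rfl⟩
      | succ i ih =>
        intro h
        have hik : i < k := by omega
        obtain ⟨hli, hci⟩ := ih hik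
        have hc := hci h
        have hadj : (SimpleGraph.pathGraph k).Adj (⟨i + 1, h⟩ : Fin k) ⟨i, hik⟩ :=
          SimpleGraph.pathGraph_adj.mpr (Or.inr rfl)
        have hcross : ∀ v : V, s((v, (⟨i + 1, h⟩ : Fin k)), (v, ⟨i, hik⟩)) ∈ S := by
          intro v
          rw [Sym2.eq_swap]
          exact hc v
        have hl : ∀ v w, G.Adj v w → s((v, (⟨i + 1, h⟩ : Fin k)), (w, ⟨i + 1, h⟩)) ∈ S := by
          intro v w hvw
          have h1 : (↑Fp : Set (Sym2 V)) ⊆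
              {e | Sym2.map (fun v => (v, (⟨i + 1, h⟩ : Fin k))) e ∈ S} := by
            intro e he
            refine hsub _ (Or.inr (Or.inl ?_))
            rw [hBdef, Finset.mem_biUnion]
            refine ⟨i, Finset.mem_range.mpr (by omega), ?_⟩
            rw [dif_pos h, Finset.mem_image]
            exact ⟨e, Finset.mem_coe.mp he, rfl⟩
          have := hFpP _ h1 (layer_closed_pred hclosed hr _ _ hadj hcross)
            (G.mem_edgeSet.mpr hvw)
          simpa [Sym2.map_pair_eq] using this
        refine ⟨hl, fun h' v => ?_⟩
        by_cases hd : r ≤ deg v + 1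
        · exact hclosed (v, ⟨i + 1, h⟩)
            (le_trans hd (ncard_layer_nbrs' _ _ v (fun w hw => hl v w hw) hadj (hcross v)))
            (v, ⟨i + 2, h'⟩) (Or.inr ⟨SimpleGraph.pathGraph_adj.mpr (Or.inl rfl), rfl⟩)
        · refine hsub _ (Or.inr (Or.inr (Or.inr ?_)))
          rw [hDdef, Finset.mem_biUnion]
          refine ⟨i, Finset.mem_range.mpr (by omega), ?_⟩
          rw [dif_pos h', Finset.mem_image]
          exact ⟨v, Finset.mem_filter.mpr ⟨Finset.mem_univ v, by omega⟩, rfl⟩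
    intro e
    induction e using Sym2.ind with
    | _ x y =>
      intro he
      obtain ⟨x1, x2⟩ := x
      obtain ⟨y1, y2⟩ := y
      rw [SimpleGraph.mem_edgeSet] at he
      rcases he with ⟨hG, h2⟩ | ⟨hP, h1⟩
      · dsimp only at hG h2
        subst h2
        exact (key x2.val x2.isLt).1 x1 y1 hG
      · dsimp only at hP h1
        subst h1
        rw [SimpleGraph.pathGraph_adj] at hP
        rcases hP with hh | hh
        · have hy2 : y2 = (⟨(x2 : ℕ) + 1, by omega⟩ : Fin k) := Fin.ext hh.symm
          rw [hy2]
          exact (key x2.val x2.isLt).2 (by omega) x1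
        · have hx2 : x2 = (⟨(y2 : ℕ) + 1, by omega⟩ : Fin k) := Fin.ext hh.symm
          rw [Sym2.eq_swap, hx2]
          exact (key y2.val y2.isLt).2 (by omega) x1
  -- cardinality bounds
  have hle : mEdge (G.boxProd (SimpleGraph.pathGraph k)) r ≤ F.card :=
    Nat.sInf_le ⟨F, hFE, hperc, rfl⟩
  have hdegeq : ∀ t : ℕ, degCount G t = (Finset.univ.filter fun v => deg v = t).card := by
    intro t
    rw [degCount, show {v : V | (G.neighborSet v).ncard = t}
        = ↑(Finset.univ.filter fun v => deg v = t) by ext v; simp [hdeg],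
      Set.ncard_coe_finset]
  have hSig : (Finset.univ.filter fun v => deg v + 2 ≤ r).card
      = ∑ t ∈ Finset.range (r - 1), degCount G t := by
    rw [Finset.card_eq_sum_card_fiberwise (f := deg) (t := Finset.range (r - 1))
      (fun v hv => Finset.mem_range.mpr (by
        have := (Finset.mem_filter.mp hv).2; omega))]
    refine Finset.sum_congr rfl (fun t ht => ?_)
    rw [hdegeq t]
    congr 1
    rw [Finset.filter_filter]
    apply Finset.filter_congr
    intro v _
    have := Finset.mem_range.mp ht
    constructor
    · rintro ⟨-, h2⟩; exact h2
    · intro h2; exact ⟨by omega, h2⟩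
  have hAc : A.card ≤ mEdge G r := by
    rw [hAdef, ← hFrC]; exact Finset.card_image_le
  have hBc : B.card ≤ (k - 1) * mEdge G (r - 1) := by
    rw [hBdef]
    refine le_trans (Finset.card_biUnion_le) ?_
    refine le_trans (Finset.sum_le_sum (g := fun _ => Fp.card) (fun j _ => ?_)) ?_
    · split
      · exact Finset.card_image_le
      · simp
    · rw [Finset.sum_const, Finset.card_range, smul_eq_mul, hFpC]
  have hCc : C.card ≤ degCount G (r - 1) + ∑ t ∈ Finset.range (r - 1), degCount G t := by
    rw [hCdef]
    refine le_trans Finset.card_image_le ?_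
    have hsplit : (Finset.univ.filter fun v => deg v + 1 ≤ r) ⊆
        (Finset.univ.filter fun v => deg v = r - 1) ∪
          (Finset.univ.filter fun v => deg v + 2 ≤ r) := by
      intro v hv
      simp only [Finset.mem_filter, Finset.mem_union, Finset.mem_univ, true_and] at *
      omega
    refine le_trans (Finset.card_le_card hsplit) (le_trans (Finset.card_union_le _ _) ?_)
    rw [← hdegeq, hSig]
  have hDc : D.card ≤ (k - 2) * ∑ t ∈ Finset.range (r - 1), degCount G t := by
    rw [hDdef]
    refine le_trans (Finset.card_biUnion_le) ?_
    refine le_trans (Finset.sum_le_sum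
      (g := fun _ => (Finset.univ.filter fun v => deg v + 2 ≤ r).card) (fun j _ => ?_)) ?_
    · split
      · exact Finset.card_image_le
      · simp
    · rw [Finset.sum_const, Finset.card_range, smul_eq_mul, hSig]
  have hFc : F.card ≤ A.card + B.card + C.card + D.card := by
    rw [hFdef]
    calc (A ∪ B ∪ C ∪ D).card ≤ (A ∪ B ∪ C).card + D.card := Finset.card_union_le _ _
      _ ≤ (A ∪ B).card + C.card + D.card := by
          have := Finset.card_union_le (A ∪ B) C; omega
      _ ≤ A.card + B.card + C.card + D.card := by
          have := Finset.card_union_le A B; omega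
  have hsplit : (k - 1) * ∑ t ∈ Finset.range (r - 1), degCount G t
      = (∑ t ∈ Finset.range (r - 1), degCount G t)
        + (k - 2) * ∑ t ∈ Finset.range (r - 1), degCount G t := by
    rw [show k - 1 = 1 + (k - 2) by omega, add_mul, one_mul]
  calc mEdge (G.boxProd (SimpleGraph.pathGraph k)) r ≤ F.card := hle
    _ ≤ A.card + B.card + C.card + D.card := hFc
    _ ≤ mEdge G r + (k - 1) * mEdge G (r - 1) + degCount G (r - 1)
        + (k - 1) * ∑ t ∈ Finset.range (r - 1), degCount G t := by
      rw [hsplit]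
      have := hAc; have := hBc; have := hCc; have := hDc
      omega
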